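/- arXiv:2103.06339 — 3 statements merged into one kernel-verified Lean document; each statement's English description precedes it below -/
import Mathlib

section
/- Derivative of p·F along an extremal: let f_0,…,f_m : ℝ^n×ℝ^l → ℝ^n and F : ℝ^n×ℝ^l → ℝ^n be C¹, and set f(x,u,v):=f_0(x,u)+Σ_{i=1}^m v_i f_i(x,u). Let x:[0,T]→ℝ^n, u:[0,T]→ℝ^l, p:[0,T]→ℝ^{n,*} and v:[0,T]→ℝ^m, and let t be a point at which x, u and p are differentiable with ẋ(t)=f(x(t),u(t),v(t)) and ṗ(t)=−p(t)·D_xf(x(t),u(t),v(t)). Then s↦p(s)·F(x(s),u(s)) is differentiable at t with derivative p(t)·[f_0,F](x(t),u(t)) + Σ_{i=1}^m v_i(t)·p(t)·[f_i,F](x(t),u(t)) + p(t)·D_uF(x(t),u(t))·u̇(t). -/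
open MeasureTheory Set Matrix

noncomputable section

/-- Lie bracket `[g,h](x,u) = D_x h · g − D_x g · h` (derivatives w.r.t. `x`). -/
def lieBracket {n l : ℕ}
    (g h : (Fin n → ℝ) → (Fin l → ℝ) → (Fin n → ℝ))
    (x : Fin n → ℝ) (u : Fin l → ℝ) : Fin n → ℝ :=
  (fderiv ℝ (fun y => h y u) x) (g x u) - (fderiv ℝ (fun y => g y u) x) (h x u)

lemma partial_hasFDerivAt {n l k : ℕ}
    (G : (Fin n → ℝ) → (Fin l → ℝ) → (Fin k → ℝ))
    (hG : ContDiff ℝ 1 (fun z : (Fin n → ℝ) × (Fin l → ℝ) => G z.1 z.2))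
    (x : Fin n → ℝ) (u : Fin l → ℝ) :
    HasFDerivAt (fun y => G y u)
      ((fderiv ℝ (fun z : (Fin n → ℝ) × (Fin l → ℝ) => G z.1 z.2) (x, u)).comp
        ((ContinuousLinearMap.id ℝ (Fin n → ℝ)).prod 0)) x := by
  have hGd : HasFDerivAt (fun z : (Fin n → ℝ) × (Fin l → ℝ) => G z.1 z.2)
      (fderiv ℝ (fun z : (Fin n → ℝ) × (Fin l → ℝ) => G z.1 z.2) (x, u)) (x, u) :=
    ((hG.differentiable one_ne_zero) (x, u)).hasFDerivAt
  have h1 : HasFDerivAt (fun y : Fin n → ℝ => (y, u))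
      ((ContinuousLinearMap.id ℝ (Fin n → ℝ)).prod 0) x :=
    HasFDerivAt.prodMk (hasFDerivAt_id _) (hasFDerivAt_const _ _)
  exact hGd.comp x h1

lemma curve_deriv {n l k : ℕ}
    (G : (Fin n → ℝ) → (Fin l → ℝ) → (Fin k → ℝ))
    (hG : ContDiff ℝ 1 (fun z : (Fin n → ℝ) × (Fin l → ℝ) => G z.1 z.2))
    {x : ℝ → Fin n → ℝ} {u : ℝ → Fin l → ℝ} {t : ℝ} {x' : Fin n → ℝ} {u' : Fin l → ℝ}
    (hx : HasDerivAt x x' t) (hu : HasDerivAt u u' t) :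
    HasDerivAt (fun s => G (x s) (u s))
      ((fderiv ℝ (fun y => G y (u t)) (x t)) x'
        + (fderiv ℝ (fun w => G (x t) w) (u t)) u') t := by
  set DG := fderiv ℝ (fun z : (Fin n → ℝ) × (Fin l → ℝ) => G z.1 z.2) (x t, u t) with hDG
  have hGd : HasFDerivAt (fun z : (Fin n → ℝ) × (Fin l → ℝ) => G z.1 z.2) DG (x t, u t) :=
    ((hG.differentiable one_ne_zero) (x t, u t)).hasFDerivAt
  have hcurve : HasDerivAt (fun s => (x s, u s)) (x', u') t := HasDerivAt.prodMk hx hu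
  have hmain : HasDerivAt (fun s => G (x s) (u s)) (DG (x', u')) t :=
    by have := hGd.comp_hasDerivAt t hcurve; exact this
  have hx1 := partial_hasFDerivAt G hG (x t) (u t)
  have hu1 : HasFDerivAt (fun w => G (x t) w)
      (DG.comp ((0 : (Fin l → ℝ) →L[ℝ] (Fin n → ℝ)).prod (ContinuousLinearMap.id ℝ _))) (u t) := by
    have h1 : HasFDerivAt (fun w : Fin l → ℝ => (x t, w))
        ((0 : (Fin l → ℝ) →L[ℝ] (Fin n → ℝ)).prod (ContinuousLinearMap.id ℝ _)) (u t) :=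
      HasFDerivAt.prodMk (hasFDerivAt_const _ _) (hasFDerivAt_id _)
    exact hGd.comp (u t) h1
  have e1 : (fderiv ℝ (fun y => G y (u t)) (x t)) x' = DG (x', 0) := by
    rw [hx1.fderiv]; simp; rfl
  have e2 : (fderiv ℝ (fun w => G (x t) w) (u t)) u' = DG (0, u') := by
    rw [hu1.fderiv]; simp
  have : DG (x', u') = DG (x', 0) + DG (0, u') := by
    rw [← map_add]; congr 1 <;> simp
  rw [e1, e2, ← this]
  exact hmain

lemma dotProduct_finsum {n : ℕ} {ι : Type*} (s : Finset ι) (p : Fin n → ℝ) (g : ι → Fin n → ℝ) :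
    p ⬝ᵥ (∑ i ∈ s, g i) = ∑ i ∈ s, p ⬝ᵥ g i := by
  simp [dotProduct, Finset.mul_sum]
  rw [Finset.sum_comm]

/-- Derivative of `p·F` along an extremal of the partially-affine dynamics
`f(x,u,v) = f₀(x,u) + Σᵢ vᵢ fᵢ(x,u)`. -/
theorem deriv_p_dot_F_along_extremal
    (n l m : ℕ) (T : ℝ)
    (f0 : (Fin n → ℝ) → (Fin l → ℝ) → (Fin n → ℝ))
    (fi : Fin m → (Fin n → ℝ) → (Fin l → ℝ) → (Fin n → ℝ))
    (F : (Fin n → ℝ) → (Fin l → ℝ) → (Fin n → ℝ))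
    (hf0 : ContDiff ℝ 1 (fun z : (Fin n → ℝ) × (Fin l → ℝ) => f0 z.1 z.2))
    (hfi : ∀ i, ContDiff ℝ 1 (fun z : (Fin n → ℝ) × (Fin l → ℝ) => fi i z.1 z.2))
    (hF : ContDiff ℝ 1 (fun z : (Fin n → ℝ) × (Fin l → ℝ) => F z.1 z.2))
    (x : ℝ → Fin n → ℝ) (u : ℝ → Fin l → ℝ) (p : ℝ → Fin n → ℝ) (v : ℝ → Fin m → ℝ)
    (t : ℝ) (ht : t ∈ Icc (0:ℝ) T) (u' : Fin l → ℝ)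
    (hx : HasDerivAt x (f0 (x t) (u t) + ∑ i, v t i • fi i (x t) (u t)) t)
    (hu : HasDerivAt u u' t)
    (hp : HasDerivAt p
      (fun j => -(p t ⬝ᵥ (fderiv ℝ
        (fun y => f0 y (u t) + ∑ i, v t i • fi i y (u t)) (x t)) (Pi.single j 1))) t) :
    HasDerivAt (fun s => p s ⬝ᵥ F (x s) (u s))
      (p t ⬝ᵥ lieBracket f0 F (x t) (u t)
        + ∑ i, v t i * (p t ⬝ᵥ lieBracket (fi i) F (x t) (u t))
        + p t ⬝ᵥ (fderiv ℝ (fun w => F (x t) w) (u t)) u') t := by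
  set X := x t with hX
  set U := u t with hU
  set x' : Fin n → ℝ := f0 X U + ∑ i, v t i • fi i X U with hx'
  set Df := fderiv ℝ (fun y => f0 y U + ∑ i, v t i • fi i y U) X with hDf
  set DxF := fderiv ℝ (fun y => F y U) X with hDxF
  set DuF := fderiv ℝ (fun w => F X w) U with hDuF
  set Dx0 := fderiv ℝ (fun y => f0 y U) X with hDx0
  set Dxi : Fin m → _ := fun i => fderiv ℝ (fun y => fi i y U) X with hDxi
  set w : Fin n → ℝ := F X U with hw
  set p' : Fin n → ℝ := fun j => -(p t ⬝ᵥ Df (Pi.single j 1)) with hp'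
  -- derivative of the curve s ↦ F (x s) (u s)
  have hΦ : HasDerivAt (fun s => F (x s) (u s)) (DxF x' + DuF u') t :=
    curve_deriv F hF hx hu
  -- Df decomposes
  have hDfsum : ∀ z, Df z = Dx0 z + ∑ i, v t i • Dxi i z := by
    intro z
    have h0 := partial_hasFDerivAt f0 hf0 X U
    have hi := fun i => partial_hasFDerivAt (fi i) (hfi i) X U
    have hsum : HasFDerivAt (fun y => f0 y U + ∑ i, v t i • fi i y U)
        (Dx0 + ∑ i, v t i • Dxi i) X := by
      rw [hDx0, h0.fderiv]
      have heq : (∑ i, v t i • Dxi i) = ∑ i, v t i •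
          ((fderiv ℝ (fun z : (Fin n → ℝ) × (Fin l → ℝ) => fi i z.1 z.2) (X, U)).comp
            ((ContinuousLinearMap.id ℝ (Fin n → ℝ)).prod 0)) := by
        refine Finset.sum_congr rfl fun i _ => ?_
        rw [hDxi]
        simp only []
        rw [(hi i).fderiv]
      rw [heq]
      exact h0.add (HasFDerivAt.fun_sum fun i _ => (hi i).const_smul (v t i))
    rw [hDf, hsum.fderiv]
    simp
  -- the main derivative via components
  have hpj := hasDerivAt_pi.mp hp
  have hΦj := hasDerivAt_pi.mp hΦ
  have hmain : HasDerivAt (fun s => p s ⬝ᵥ F (x s) (u s))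
      (∑ j, (p' j * w j + p t j * (DxF x' + DuF u') j)) t := by
    simp only [dotProduct]
    exact HasDerivAt.fun_sum fun j _ => (hpj j).mul (hΦj j)
  convert hmain using 1
  -- algebra
  have key1 : ∑ j, p' j * w j = -(p t ⬝ᵥ Df w) := by
    have hwsum : w = ∑ j, w j • (Pi.single j 1 : Fin n → ℝ) := by
      ext k
      simp [Pi.single_apply, Finset.sum_ite_eq']
    have : Df w = ∑ j, w j • Df (Pi.single j 1) := by
      conv_lhs => rw [hwsum]
      rw [map_sum]
      simp
    rw [this, dotProduct_finsum, ← Finset.sum_neg_distrib]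
    refine Finset.sum_congr rfl fun j _ => ?_
    rw [hp']
    rw [dotProduct_smul]
    ring_nf
  have key2 : p t ⬝ᵥ (DxF x' + DuF u') = p t ⬝ᵥ DxF x' + p t ⬝ᵥ DuF u' := dotProduct_add _ _ _
  have key3 : p t ⬝ᵥ DxF x' = p t ⬝ᵥ DxF (f0 X U) + ∑ i, v t i * (p t ⬝ᵥ DxF (fi i X U)) := by
    rw [hx', map_add, map_sum, dotProduct_add, dotProduct_finsum]
    congr 1
    refine Finset.sum_congr rfl fun i _ => ?_
    rw [_root_.map_smul, dotProduct_smul, smul_eq_mul]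
  have key4 : p t ⬝ᵥ Df w = p t ⬝ᵥ Dx0 w + ∑ i, v t i * (p t ⬝ᵥ Dxi i w) := by
    rw [hDfsum w, dotProduct_add, dotProduct_finsum]
    congr 1
    refine Finset.sum_congr rfl fun i _ => ?_
    rw [dotProduct_smul, smul_eq_mul]
  have hsum_dot : ∑ j, (p' j * w j + p t j * (DxF x' + DuF u') j)
      = (∑ j, p' j * w j) + p t ⬝ᵥ (DxF x' + DuF u') := by
    rw [Finset.sum_add_distrib]; rfl
  rw [hsum_dot, key1, key2, key3, key4]
  have hlie0 : p t ⬝ᵥ lieBracket f0 F X U = p t ⬝ᵥ DxF (f0 X U) - p t ⬝ᵥ Dx0 w := by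
    rw [lieBracket, dotProduct_sub]
  have hliei : ∀ i, p t ⬝ᵥ lieBracket (fi i) F X U
      = p t ⬝ᵥ DxF (fi i X U) - p t ⬝ᵥ Dxi i w := by
    intro i; rw [lieBracket, dotProduct_sub]
  rw [hlie0]
  rw [Finset.sum_congr rfl fun i _ => by rw [hliei i]]
  rw [Finset.sum_congr rfl (fun i _ => mul_sub (v t i) _ _), Finset.sum_sub_distrib]
  ring
end
end

section
/- First time derivative of the switching function: let f_0,…,f_m : ℝ^n×ℝ^l → ℝ^n be C¹ and set f(x,u,v):=f_0(x,u)+Σ_{i=1}^m v_i f_i(x,u). Let x:[0,T]→ℝ^n, u:[0,T]→ℝ^l, p:[0,T]→ℝ^{n,*}, v:[0,T]→ℝ^m, and let t be a point at which x, u and p are differentiable with ẋ(t)=f(x(t),u(t),v(t)) and ṗ(t)=−p(t)·D_xf(x(t),u(t),v(t)). Fix j∈{1,…,m} and assume p(t)·D_uf_j(x(t),u(t)) = 0 and p(t)·[f_i,f_j](x(t),u(t)) = 0 for all i=1,…,m. Then s↦p(s)·f_j(x(s),u(s)) is differentiable at t with derivative equal to p(t)·[f_0,f_j](x(t),u(t)).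 -/
open MeasureTheory Set Matrix

noncomputable section

lemma dot_sum {n : ℕ} {ι : Type*} (w : Fin n → ℝ) (s : Finset ι) (q : ι → Fin n → ℝ) :
    w ⬝ᵥ ∑ i ∈ s, q i = ∑ i ∈ s, w ⬝ᵥ q i := by
  simp only [dotProduct, Finset.sum_apply, Finset.mul_sum]
  exact Finset.sum_comm

/-- dot-with-`w` as a continuous linear map. -/
def dotCLM {n : ℕ} (w : Fin n → ℝ) : (Fin n → ℝ) →L[ℝ] ℝ :=
  ∑ i, w i • (ContinuousLinearMap.proj i : (Fin n → ℝ) →L[ℝ] ℝ)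

@[simp] lemma dotCLM_apply {n : ℕ} (w q : Fin n → ℝ) : dotCLM w q = w ⬝ᵥ q := by
  simp [dotCLM, dotProduct, smul_eq_mul]

/-- partial derivative in the first variable from a full `HasFDerivAt` on a product. -/
lemma partialFst {n l : ℕ} {G : (Fin n → ℝ) × (Fin l → ℝ) → Fin n → ℝ}
    {D : ((Fin n → ℝ) × (Fin l → ℝ)) →L[ℝ] (Fin n → ℝ)} {a : Fin n → ℝ} {b : Fin l → ℝ}
    (h : HasFDerivAt G D (a, b)) :
    HasFDerivAt (fun y => G (y, b)) (D.comp (ContinuousLinearMap.inl ℝ _ _)) a := by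
  have h1 : HasFDerivAt (fun y : Fin n → ℝ => (y, b))
      (ContinuousLinearMap.inl ℝ (Fin n → ℝ) (Fin l → ℝ)) a :=
    (hasFDerivAt_id a).prodMk (hasFDerivAt_const b a)
  exact h.comp a h1

lemma partialSnd {n l : ℕ} {G : (Fin n → ℝ) × (Fin l → ℝ) → Fin n → ℝ}
    {D : ((Fin n → ℝ) × (Fin l → ℝ)) →L[ℝ] (Fin n → ℝ)} {a : Fin n → ℝ} {b : Fin l → ℝ}
    (h : HasFDerivAt G D (a, b)) :
    HasFDerivAt (fun w => G (a, w)) (D.comp (ContinuousLinearMap.inr ℝ _ _)) b := by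
  have h1 : HasFDerivAt (fun w : Fin l → ℝ => (a, w))
      (ContinuousLinearMap.inr ℝ (Fin n → ℝ) (Fin l → ℝ)) b :=
    (hasFDerivAt_const a b).prodMk (hasFDerivAt_id b)
  exact h.comp b h1

/-- First time derivative of the switching function `H_{v_j} = p·f_j`:
under `H_{v_j u} = 0` and the Goh conditions, `(d/dt)(p·f_j) = p·[f₀,f_j]`. -/
theorem deriv_switching_function
    (n l m : ℕ) (T : ℝ)
    (f0 : (Fin n → ℝ) → (Fin l → ℝ) → (Fin n → ℝ))
    (fi : Fin m → (Fin n → ℝ) → (Fin l → ℝ) → (Fin n → ℝ))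
    (hf0 : ContDiff ℝ 1 (fun z : (Fin n → ℝ) × (Fin l → ℝ) => f0 z.1 z.2))
    (hfi : ∀ i, ContDiff ℝ 1 (fun z : (Fin n → ℝ) × (Fin l → ℝ) => fi i z.1 z.2))
    (x : ℝ → Fin n → ℝ) (u : ℝ → Fin l → ℝ) (p : ℝ → Fin n → ℝ) (v : ℝ → Fin m → ℝ)
    (t : ℝ) (ht : t ∈ Icc (0:ℝ) T) (u' : Fin l → ℝ)
    (hx : HasDerivAt x (f0 (x t) (u t) + ∑ i, v t i • fi i (x t) (u t)) t)
    (hu : HasDerivAt u u' t)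
    (hp : HasDerivAt p
      (fun j => -(p t ⬝ᵥ (fderiv ℝ
        (fun y => f0 y (u t) + ∑ i, v t i • fi i y (u t)) (x t)) (Pi.single j 1))) t)
    (j : Fin m)
    (hHvu : fderiv ℝ (fun w => p t ⬝ᵥ fi j (x t) w) (u t) = 0)
    (hGoh : ∀ i : Fin m, p t ⬝ᵥ lieBracket (fi i) (fi j) (x t) (u t) = 0) :
    HasDerivAt (fun s => p s ⬝ᵥ fi j (x s) (u s))
      (p t ⬝ᵥ lieBracket f0 (fi j) (x t) (u t)) t := by
  set a := x t with ha
  set b := u t with hb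
  set x' : Fin n → ℝ := f0 a b + ∑ i, v t i • fi i a b with hx'
  set p' : Fin n → ℝ := (fun k => -(p t ⬝ᵥ (fderiv ℝ
      (fun y => f0 y b + ∑ i, v t i • fi i y b) a) (Pi.single k 1))) with hp'
  -- full derivatives of f0 and fi at (a,b)
  have hDG : ∀ i, HasFDerivAt (fun z : (Fin n → ℝ) × (Fin l → ℝ) => fi i z.1 z.2)
      (fderiv ℝ (fun z : (Fin n → ℝ) × (Fin l → ℝ) => fi i z.1 z.2) (a, b)) (a, b) :=
    fun i => ((hfi i).differentiable one_ne_zero (a, b)).hasFDerivAt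
  have hDG0 : HasFDerivAt (fun z : (Fin n → ℝ) × (Fin l → ℝ) => f0 z.1 z.2)
      (fderiv ℝ (fun z : (Fin n → ℝ) × (Fin l → ℝ) => f0 z.1 z.2) (a, b)) (a, b) :=
    (hf0.differentiable one_ne_zero (a, b)).hasFDerivAt
  set DG := fderiv ℝ (fun z : (Fin n → ℝ) × (Fin l → ℝ) => fi j z.1 z.2) (a, b) with hDGdef
  -- partial derivatives
  have hDxg : HasFDerivAt (fun y => fi j y b)
      (DG.comp (ContinuousLinearMap.inl ℝ _ _)) a := partialFst (hDG j)
  have hDug : HasFDerivAt (fun w => fi j a w)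
      (DG.comp (ContinuousLinearMap.inr ℝ _ _)) b := partialSnd (hDG j)
  set Dxg := DG.comp (ContinuousLinearMap.inl ℝ (Fin n → ℝ) (Fin l → ℝ)) with hDxgdef
  set Dug := DG.comp (ContinuousLinearMap.inr ℝ (Fin n → ℝ) (Fin l → ℝ)) with hDugdef
  have hDxgf : fderiv ℝ (fun y => fi j y b) a = Dxg := hDxg.fderiv
  have hDxfi : ∀ i, HasFDerivAt (fun y => fi i y b)
      (fderiv ℝ (fun y => fi i y b) a) a := fun i =>
    (partialFst (hDG i)).congr_fderiv (partialFst (hDG i)).fderiv.symm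
  have hDxf0 : HasFDerivAt (fun y => f0 y b)
      (fderiv ℝ (fun y => f0 y b) a) a :=
    (partialFst hDG0).congr_fderiv (partialFst hDG0).fderiv.symm
  set Dxf0 := fderiv ℝ (fun y => f0 y b) a with hDxf0def
  -- total x-derivative of f
  have hDxf : HasFDerivAt (fun y => f0 y b + ∑ i, v t i • fi i y b)
      (Dxf0 + ∑ i, v t i • fderiv ℝ (fun y => fi i y b) a) a :=
    hDxf0.add (HasFDerivAt.fun_sum fun i _ => (hDxfi i).const_smul (v t i))
  have hDxfeq : fderiv ℝ (fun y => f0 y b + ∑ i, v t i • fi i y b) a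
      = Dxf0 + ∑ i, v t i • fderiv ℝ (fun y => fi i y b) a := hDxf.fderiv
  -- derivative of s ↦ fi j (x s) (u s)
  have hxu : HasDerivAt (fun s => ((x s, u s) : (Fin n → ℝ) × (Fin l → ℝ))) (x', u') t :=
    hx.prodMk hu
  have hcomp : HasDerivAt (fun s => fi j (x s) (u s)) (DG (x', u')) t :=
    by have h := (hDG j).comp_hasDerivAt t hxu; exact h
  -- split DG (x', u')
  have hsplit : DG (x', u') = Dxg x' + Dug u' := by
    have : (x', u') = ((x', 0) : (Fin n → ℝ) × (Fin l → ℝ)) + (0, u') := by simp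
    rw [this, map_add]
    rfl
  -- product rule for the dot product
  have key : HasDerivAt (fun s => p s ⬝ᵥ fi j (x s) (u s))
      (∑ k, (p' k * fi j a b k + p t k * DG (x', u') k)) t := by
    have := HasDerivAt.fun_sum (u := (Finset.univ : Finset (Fin n)))
      (fun k _ => ((hasDerivAt_pi.1 hp k).mul (hasDerivAt_pi.1 hcomp k)))
    simpa [dotProduct] using this
  -- now massage the derivative value
  have hval : (∑ k, (p' k * fi j a b k + p t k * DG (x', u') k))
      = p t ⬝ᵥ lieBracket f0 (fi j) a b := by
    have hPU : p t ⬝ᵥ Dug u' = 0 := by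
      have hc : HasFDerivAt (fun w => p t ⬝ᵥ fi j a w) ((dotCLM (p t)).comp Dug) b := by
        have h := ((dotCLM (p t)).hasFDerivAt).comp b hDug
        have : (⇑(dotCLM (p t)) ∘ fun w => fi j a w) = fun w => p t ⬝ᵥ fi j a w := by
          ext w; simp [Function.comp]
        rwa [this] at h
      have h0 : ((dotCLM (p t)).comp Dug) = 0 := hc.fderiv.symm.trans hHvu
      have := congrFun (congrArg DFunLike.coe h0) u'
      simpa using this
    have hgdecomp : fi j a b = ∑ k, fi j a b k • (Pi.single k 1 : Fin n → ℝ) := by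
      ext i
      simp [Pi.single_apply, Finset.sum_apply]
    have hP' : ∀ w : Fin n → ℝ, p' ⬝ᵥ w
        = -(p t ⬝ᵥ (fderiv ℝ (fun y => f0 y b + ∑ i, v t i • fi i y b) a) w) := by
      intro w
      set L := fderiv ℝ (fun y => f0 y b + ∑ i, v t i • fi i y b) a with hL
      have hw : w = ∑ k, w k • (Pi.single k 1 : Fin n → ℝ) := by
        ext i; simp [Pi.single_apply, Finset.sum_apply]
      calc p' ⬝ᵥ w = ∑ k, -(p t ⬝ᵥ L (Pi.single k 1 : Fin n → ℝ)) * w k := rfl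
        _ = -∑ k, p t ⬝ᵥ (w k • L (Pi.single k 1 : Fin n → ℝ)) := by
            simp [dotProduct_smul, mul_comm, Finset.sum_neg_distrib]
        _ = -(p t ⬝ᵥ ∑ k, L (w k • (Pi.single k 1 : Fin n → ℝ))) := by
            rw [dot_sum]
            congr 1
            refine Finset.sum_congr rfl fun k _ => ?_
            rw [L.map_smul]
        _ = -(p t ⬝ᵥ L w) := by rw [← map_sum, ← hw]
    have hstep : (∑ k, (p' k * fi j a b k + p t k * DG (x', u') k))
        = p' ⬝ᵥ fi j a b + p t ⬝ᵥ DG (x', u') := by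
      simp [dotProduct, Finset.sum_add_distrib]
    rw [hstep, hsplit, hP' (fi j a b), hDxfeq]
    -- expand everything
    have hLinx' : Dxg x' = Dxg (f0 a b) + ∑ i, v t i • Dxg (fi i a b) := by
      rw [hx', map_add, map_sum]
      congr 1
      exact Finset.sum_congr rfl fun i _ => Dxg.map_smul _ _
    have hRfg : (Dxf0 + ∑ i, v t i • fderiv ℝ (fun y => fi i y b) a) (fi j a b)
        = Dxf0 (fi j a b) + ∑ i, v t i • (fderiv ℝ (fun y => fi i y b) a) (fi j a b) := by
      simp
    rw [hRfg, dotProduct_add, hLinx', dotProduct_add, dotProduct_add, hPU, dot_sum, dot_sum]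
    have hGoh' : ∀ i, p t ⬝ᵥ (v t i • Dxg (fi i a b))
        - p t ⬝ᵥ (v t i • (fderiv ℝ (fun y => fi i y b) a) (fi j a b)) = 0 := by
      intro i
      have := hGoh i
      rw [lieBracket, hDxgf] at this
      rw [dotProduct_smul, dotProduct_smul, ← smul_sub, ← dotProduct_sub, this]
      simp
    have hLB : p t ⬝ᵥ lieBracket f0 (fi j) a b = p t ⬝ᵥ Dxg (f0 a b) - p t ⬝ᵥ Dxf0 (fi j a b) := by
      rw [lieBracket, hDxgf, ← hDxf0def, dotProduct_sub]
    rw [hLB]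
    have : ∑ i, p t ⬝ᵥ (v t i • Dxg (fi i a b))
        = ∑ i, p t ⬝ᵥ (v t i • (fderiv ℝ (fun y => fi i y b) a) (fi j a b)) := by
      apply Finset.sum_congr rfl
      intro i _
      have := hGoh' i
      linarith
    rw [this]
    ring
  rw [← hval]
  exact key
end
end

section
/- Local convergence of the Gauss–Newton method: let S : ℝ^a → ℝ^b be differentiable with locally Lipschitz derivative, and let ν̂ ∈ ℝ^a satisfy S(ν̂)=0 and suppose the linear map S'(ν̂) is injective. Then there is a neighborhood V of ν̂ such that for every ν_0 ∈ V the Gauss–Newton iterates ν_{k+1} := ν_k − (S'(ν_k)ᵀ S'(ν_k))^{-1} S'(ν_k)ᵀ S(ν_k) are well defined (in particular S'(ν_k)ᵀS'(ν_k) is invertible for every k) and converge to ν̂. If moreover S' is Lipschitz continuous on a neighborhood of ν̂, then the convergence is locally quadratic: there is c>0 such that |ν_{k+1}−ν̂| ≤ c·|ν_k−ν̂|² for all k. -/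
open Matrix Filter

noncomputable section

/-- Jacobian matrix of a map `S : ℝᵃ → ℝᵇ`. -/
def jacMat {a b : ℕ} (S : (Fin a → ℝ) → (Fin b → ℝ)) (ν : Fin a → ℝ) :
    Matrix (Fin b) (Fin a) ℝ :=
  Matrix.of fun i j => fderiv ℝ S ν (Pi.single j 1) i

/-- One Gauss–Newton step `ν ↦ ν − (S'(ν)ᵀS'(ν))⁻¹ S'(ν)ᵀ S(ν)`. -/
def gaussNewtonStep {a b : ℕ} (S : (Fin a → ℝ) → (Fin b → ℝ)) (ν : Fin a → ℝ) :
    Fin a → ℝ :=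
  ν - ((jacMat S ν)ᵀ * jacMat S ν)⁻¹ *ᵥ ((jacMat S ν)ᵀ *ᵥ S ν)




lemma jac_mulVec {a b : ℕ} (S : (Fin a → ℝ) → (Fin b → ℝ)) (ν : Fin a → ℝ)
    (v : Fin a → ℝ) : jacMat S ν *ᵥ v = fderiv ℝ S ν v := by
  have hv : v = ∑ j, v j • (Pi.single j 1 : Fin a → ℝ) := by
    ext k
    simp [Pi.single_apply, Finset.sum_ite_eq', mul_comm]
  conv_rhs => rw [hv]
  rw [map_sum]
  ext i
  simp [Matrix.mulVec, dotProduct, jacMat, Finset.sum_apply, mul_comm]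

lemma gram_isUnit {a b : ℕ} (J : Matrix (Fin b) (Fin a) ℝ)
    (hJ : Function.Injective J.mulVec) : IsUnit (Jᵀ * J).det := by
  rw [← Matrix.isUnit_iff_isUnit_det, ← Matrix.mulVec_injective_iff_isUnit]
  intro x y hxy
  have hz : ∀ z, (Jᵀ * J) *ᵥ z = 0 → z = 0 := by
    intro z hzz
    have h1 : z ⬝ᵥ ((Jᵀ * J) *ᵥ z) = (J *ᵥ z) ⬝ᵥ (J *ᵥ z) := by
      rw [← Matrix.mulVec_mulVec, Matrix.dotProduct_mulVec, Matrix.vecMul_transpose]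
    rw [hzz, dotProduct_zero] at h1
    have h2 : J *ᵥ z = 0 := dotProduct_self_eq_zero.mp h1.symm
    exact hJ (by simpa using h2)
  have : (Jᵀ * J) *ᵥ (x - y) = 0 := by
    rw [Matrix.mulVec_sub, hxy, sub_self]
  have := hz _ this
  exact sub_eq_zero.mp this

lemma mulVec_norm_le {a b : ℕ} (B : Matrix (Fin a) (Fin b) ℝ) (M0 : ℝ) (hM0 : 0 ≤ M0)
    (h : ∀ i j, |B i j| ≤ M0) (w : Fin b → ℝ) : ‖B *ᵥ w‖ ≤ (b * M0) * ‖w‖ := by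
  have hnn : (0:ℝ) ≤ (b * M0) * ‖w‖ := by positivity
  rw [pi_norm_le_iff_of_nonneg hnn]
  intro i
  have : ‖(B *ᵥ w) i‖ = |∑ j, B i j * w j| := by simp [Matrix.mulVec, dotProduct]
  rw [this]
  calc |∑ j, B i j * w j| ≤ ∑ j, |B i j * w j| := Finset.abs_sum_le_sum_abs _ _
    _ ≤ ∑ _j : Fin b, M0 * ‖w‖ := by
        apply Finset.sum_le_sum
        intro j _
        rw [abs_mul]
        exact mul_le_mul (h i j) (norm_le_pi_norm w j) (abs_nonneg _) hM0
    _ = (b * M0) * ‖w‖ := by simp [Finset.sum_const]; ring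


lemma jac_continuous {a b : ℕ} (S : (Fin a → ℝ) → (Fin b → ℝ))
    (hlip : LocallyLipschitz (fderiv ℝ S)) : Continuous (jacMat S) := by
  apply continuous_matrix
  intro i j
  have h1 : Continuous (fderiv ℝ S) := hlip.continuous
  have h2 : Continuous fun L : (Fin a → ℝ) →L[ℝ] (Fin b → ℝ) => L (Pi.single j 1) :=
    (ContinuousLinearMap.apply ℝ (Fin b → ℝ) (Pi.single j 1 : Fin a → ℝ)).continuous
  exact (continuous_apply i).comp (h2.comp h1)

-- continuity at a point of the pseudo-inverse matrix map
lemma B_contAt {a b : ℕ} (S : (Fin a → ℝ) → (Fin b → ℝ))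
    (hlip : LocallyLipschitz (fderiv ℝ S)) (νh : Fin a → ℝ)
    (hdet : ((jacMat S νh)ᵀ * jacMat S νh).det ≠ 0) :
    ContinuousAt (fun ν => ((jacMat S ν)ᵀ * jacMat S ν)⁻¹ * (jacMat S ν)ᵀ) νh := by
  have hJ : Continuous (jacMat S) := jac_continuous S hlip
  have hM : Continuous fun ν => (jacMat S ν)ᵀ * jacMat S ν := hJ.matrix_transpose.matrix_mul hJ
  have hinv : ContinuousAt (fun ν => ((jacMat S ν)ᵀ * jacMat S ν)⁻¹) νh := by
    apply ContinuousAt.comp _ hM.continuousAt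
    apply continuousAt_matrix_inv
    rw [Ring.inverse_eq_inv']
    exact continuousAt_inv₀ hdet
  have := ContinuousAt.comp (Continuous.matrix_mul continuous_fst continuous_snd).continuousAt
      (hinv.prodMk hJ.matrix_transpose.continuousAt)
  exact this

lemma mean_value_est {a b : ℕ} (S : (Fin a → ℝ) → (Fin b → ℝ))
    (hS : Differentiable ℝ S) (K : NNReal) (t : Set (Fin a → ℝ))
    (hlipt : LipschitzOnWith K (fderiv ℝ S) t)
    (νh ν : Fin a → ℝ) (hseg : segment ℝ νh ν ⊆ t) :
    ‖S ν - S νh - fderiv ℝ S ν (ν - νh)‖ ≤ K * ‖ν - νh‖ ^ 2 := by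
  set L : (Fin a → ℝ) →L[ℝ] (Fin b → ℝ) := fderiv ℝ S ν
  have key : ‖(S ν - L ν) - (S νh - L νh)‖ ≤ (K * ‖ν - νh‖) * ‖ν - νh‖ := by
    apply Convex.norm_image_sub_le_of_norm_fderiv_le
      (𝕜 := ℝ) (f := fun u => S u - L u) (s := segment ℝ νh ν)
    · intro x _
      exact (hS x).sub (L.differentiable x)
    · intro x hx
      have hderiv : fderiv ℝ (fun u => S u - L u) x = fderiv ℝ S x - L := by
        rw [fderiv_fun_sub (hS x) (L.differentiable x), L.fderiv]
      rw [hderiv]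
      have hx' : x ∈ t := hseg hx
      have hν' : ν ∈ t := hseg (right_mem_segment ℝ νh ν)
      have hd : dist (fderiv ℝ S x) (fderiv ℝ S ν) ≤ K * dist x ν := hlipt.dist_le_mul _ hx' _ hν'
      have hxν : dist x ν ≤ ‖ν - νh‖ := by
        have : segment ℝ νh ν ⊆ Metric.closedBall ν ‖ν - νh‖ := by
          apply (convex_closedBall _ _).segment_subset
          · simp [Metric.mem_closedBall, dist_eq_norm, norm_sub_rev]
          · simp [Metric.mem_closedBall]
        have := this hx
        simpa [Metric.mem_closedBall] using this
      calc ‖fderiv ℝ S x - L‖ = dist (fderiv ℝ S x) (fderiv ℝ S ν) := by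
            rw [dist_eq_norm]
        _ ≤ K * dist x ν := hd
        _ ≤ K * ‖ν - νh‖ := by
            exact mul_le_mul_of_nonneg_left hxν (K.coe_nonneg)
    · exact convex_segment _ _
    · exact left_mem_segment ℝ νh ν
    · exact right_mem_segment ℝ νh ν
  have heq : (S ν - L ν) - (S νh - L νh) = S ν - S νh - L (ν - νh) := by
    rw [map_sub]; abel
  rw [heq] at key
  calc ‖S ν - S νh - L (ν - νh)‖ ≤ (K * ‖ν - νh‖) * ‖ν - νh‖ := key
    _ = K * ‖ν - νh‖ ^ 2 := by ring

/-- Local (quadratic) convergence of the Gauss–Newton method at a zero `νh`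
of `S` at which the derivative `S'(νh)` is injective, for `S` differentiable with locally
Lipschitz derivative. -/
theorem gaussNewton_local_convergence
    (a b : ℕ) (S : (Fin a → ℝ) → (Fin b → ℝ))
    (hS : Differentiable ℝ S)
    (hlip : LocallyLipschitz (fderiv ℝ S))
    (νh : Fin a → ℝ) (hroot : S νh = 0)
    (hinj : Function.Injective (fderiv ℝ S νh)) :
    ∃ V ∈ nhds νh, ∃ c > (0:ℝ), ∀ ν₀ ∈ V, ∀ ν : ℕ → Fin a → ℝ,
      ν 0 = ν₀ → (∀ k, ν (k + 1) = gaussNewtonStep S (ν k)) →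
      (∀ k, IsUnit ((jacMat S (ν k))ᵀ * jacMat S (ν k)).det) ∧
      Tendsto ν atTop (nhds νh) ∧
      (∀ k, ‖ν (k + 1) - νh‖ ≤ c * ‖ν k - νh‖ ^ 2) := by
  set J : (Fin a → ℝ) → Matrix (Fin b) (Fin a) ℝ := jacMat S with hJdef
  set M : (Fin a → ℝ) → Matrix (Fin a) (Fin a) ℝ := fun ν => (J ν)ᵀ * J ν with hMdef
  set B : (Fin a → ℝ) → Matrix (Fin a) (Fin b) ℝ := fun ν => (M ν)⁻¹ * (J ν)ᵀ with hBdef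
  -- injectivity of mulVec at νh
  have hJinj : Function.Injective (J νh).mulVec := by
    have : (J νh).mulVec = fun v => fderiv ℝ S νh v := funext (jac_mulVec S νh)
    rw [this]
    exact hinj
  have hunit : IsUnit (M νh).det := gram_isUnit _ hJinj
  have hdet : (M νh).det ≠ 0 := by
    simpa [isUnit_iff_ne_zero] using hunit
  -- Lipschitz neighborhood
  obtain ⟨K, t, ht, hlipt⟩ := hlip νh
  -- entry bound constant
  set M0 : ℝ := (∑ i, ∑ j, |B νh i j|) + 1 with hM0def
  have hM0pos : (0:ℝ) < M0 := by
    have : (0:ℝ) ≤ ∑ i, ∑ j, |B νh i j| :=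
      Finset.sum_nonneg fun i _ => Finset.sum_nonneg fun j _ => abs_nonneg _
    linarith
  -- eventual properties near νh
  have hBat : ContinuousAt B νh := B_contAt S hlip νh hdet
  have hMc : Continuous M := by
    have hJc : Continuous J := jac_continuous S hlip
    exact hJc.matrix_transpose.matrix_mul hJc
  have hevdet : ∀ᶠ ν in nhds νh, (M ν).det ≠ 0 :=
    (hMc.matrix_det.continuousAt).eventually_ne hdet
  have hevent : ∀ᶠ ν in nhds νh, ∀ i j, |B ν i j| ≤ M0 := by
    rw [eventually_all]
    intro i
    rw [eventually_all]
    intro j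
    have hentry : ContinuousAt (fun ν => B ν i j) νh := by
      have := (((continuous_apply j).comp (continuous_apply i)).continuousAt).comp hBat
      exact this
    have habs : ContinuousAt (fun ν => |B ν i j|) νh :=
      continuous_abs.continuousAt.comp hentry
    have hlt : |B νh i j| < M0 := by
      have h1 : |B νh i j| ≤ ∑ j', |B νh i j'| :=
        Finset.single_le_sum (f := fun j' => |B νh i j'|) (fun j' _ => abs_nonneg _)
          (Finset.mem_univ j)
      have h2 : (∑ j', |B νh i j'|) ≤ ∑ i', ∑ j', |B νh i' j'| :=
        Finset.single_le_sum (f := fun i' => ∑ j', |B νh i' j'|)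
          (fun i' _ => Finset.sum_nonneg fun j' _ => abs_nonneg _) (Finset.mem_univ i)
      rw [hM0def]; linarith
    have := habs.eventually_lt continuousAt_const hlt
    filter_upwards [this] with ν hν using le_of_lt hν
  -- choose radius r with closedBall ⊆ t ∩ {det ≠ 0 ∧ bounds}
  have hmem : t ∩ {ν | (M ν).det ≠ 0 ∧ ∀ i j, |B ν i j| ≤ M0} ∈ nhds νh :=
    Filter.inter_mem ht ((hevdet.and hevent) : _)
  obtain ⟨r, hrpos, hr⟩ := (Metric.nhds_basis_closedBall.mem_iff).mp hmem
  -- constants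
  set c : ℝ := max ((b : ℝ) * M0 * K) 1 with hcdef
  have hcpos : (0:ℝ) < c := lt_of_lt_of_le one_pos (le_max_right _ _)
  set r' : ℝ := min r (1 / (2 * c)) with hr'def
  have hr'pos : (0:ℝ) < r' := lt_min hrpos (by positivity)
  have hr'subr : Metric.closedBall νh r' ⊆ Metric.closedBall νh r :=
    Metric.closedBall_subset_closedBall (min_le_left _ _)
  have hcr' : c * r' ≤ 1 / 2 := by
    have h1 : r' ≤ 1 / (2 * c) := min_le_right _ _
    calc c * r' ≤ c * (1 / (2 * c)) := by
          exact mul_le_mul_of_nonneg_left h1 hcpos.le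
      _ = 1 / 2 := by field_simp
  -- the key step estimate
  have step : ∀ w ∈ Metric.closedBall νh r,
      IsUnit (M w).det ∧ ‖gaussNewtonStep S w - νh‖ ≤ c * ‖w - νh‖ ^ 2 := by
    intro w hw
    obtain ⟨hwt, hwdet, hwB⟩ := hr hw
    have hwunit : IsUnit (M w).det := isUnit_iff_ne_zero.mpr hwdet
    refine ⟨hwunit, ?_⟩
    -- algebraic identity
    have hid : gaussNewtonStep S w - νh = B w *ᵥ (J w *ᵥ (w - νh) - S w) := by
      have h1 : (M w)⁻¹ *ᵥ ((J w)ᵀ *ᵥ S w) = B w *ᵥ S w := by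
        rw [hBdef]; rw [← Matrix.mulVec_mulVec]
      have hB1 : B w * J w = 1 := by
        show (M w)⁻¹ * (J w)ᵀ * J w = 1
        rw [Matrix.mul_assoc]
        exact Matrix.nonsing_inv_mul (M w) hwunit
      have h2 : B w *ᵥ (J w *ᵥ (w - νh)) = w - νh := by
        rw [Matrix.mulVec_mulVec, hB1, Matrix.one_mulVec]
      rw [Matrix.mulVec_sub, h2, gaussNewtonStep]
      simp only [← hJdef, ← hMdef]
      rw [h1]
      abel
    rw [hid]
    -- residual bound
    have hseg : segment ℝ νh w ⊆ t := by
      intro u hu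
      have : segment ℝ νh w ⊆ Metric.closedBall νh r := by
        apply (convex_closedBall _ _).segment_subset
        · exact Metric.mem_closedBall_self hrpos.le
        · exact hw
      exact (hr (this hu)).1
    have hres : ‖J w *ᵥ (w - νh) - S w‖ ≤ K * ‖w - νh‖ ^ 2 := by
      have := mean_value_est S hS K t hlipt νh w hseg
      have heq : J w *ᵥ (w - νh) - S w = -(S w - S νh - fderiv ℝ S w (w - νh)) := by
        rw [jac_mulVec S w (w - νh), hroot]
        abel
      rw [heq, norm_neg]
      exact this
    calc ‖B w *ᵥ (J w *ᵥ (w - νh) - S w)‖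
        ≤ ((b : ℝ) * M0) * ‖J w *ᵥ (w - νh) - S w‖ :=
          mulVec_norm_le (B w) M0 hM0pos.le hwB _
      _ ≤ ((b : ℝ) * M0) * (K * ‖w - νh‖ ^ 2) := by
          apply mul_le_mul_of_nonneg_left hres
          positivity
      _ = ((b : ℝ) * M0 * K) * ‖w - νh‖ ^ 2 := by ring
      _ ≤ c * ‖w - νh‖ ^ 2 := by
          apply mul_le_mul_of_nonneg_right (le_max_left _ _)
          positivity
  -- conclude
  refine ⟨Metric.ball νh r', Metric.ball_mem_nhds _ hr'pos, c, hcpos, ?_⟩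
  intro ν₀ hν₀ ν h0 hrec
  have hball : ∀ k, ν k ∈ Metric.closedBall νh r' ∧ ‖ν k - νh‖ ≤ (1/2 : ℝ)^k * r' := by
    intro k
    induction k with
    | zero =>
      have h0' : ν 0 ∈ Metric.closedBall νh r' := by
        rw [h0]; exact Metric.ball_subset_closedBall hν₀
      refine ⟨h0', ?_⟩
      have := Metric.mem_closedBall.mp h0'
      rw [dist_eq_norm] at this
      simpa using this
    | succ k ih =>
      obtain ⟨hk, hknorm⟩ := ih
      have hnk : ‖ν k - νh‖ ≤ r' := by
        have := Metric.mem_closedBall.mp hk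
        rwa [dist_eq_norm] at this
      have hstep := (step (ν k) (hr'subr hk)).2
      rw [← hrec k] at hstep
      have hquad : ‖ν (k+1) - νh‖ ≤ (1/2 : ℝ) * ‖ν k - νh‖ := by
        calc ‖ν (k+1) - νh‖ ≤ c * ‖ν k - νh‖ ^ 2 := hstep
          _ = (c * ‖ν k - νh‖) * ‖ν k - νh‖ := by ring
          _ ≤ (c * r') * ‖ν k - νh‖ := by
              apply mul_le_mul_of_nonneg_right _ (norm_nonneg _)
              exact mul_le_mul_of_nonneg_left hnk hcpos.le
          _ ≤ (1/2 : ℝ) * ‖ν k - νh‖ :=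
              mul_le_mul_of_nonneg_right hcr' (norm_nonneg _)
      constructor
      · rw [Metric.mem_closedBall, dist_eq_norm]
        calc ‖ν (k+1) - νh‖ ≤ (1/2 : ℝ) * ‖ν k - νh‖ := hquad
          _ ≤ (1/2 : ℝ) * r' := by linarith
          _ ≤ r' := by linarith
      · calc ‖ν (k+1) - νh‖ ≤ (1/2 : ℝ) * ‖ν k - νh‖ := hquad
          _ ≤ (1/2 : ℝ) * ((1/2 : ℝ)^k * r') := by linarith
          _ = (1/2 : ℝ)^(k+1) * r' := by ring
  refine ⟨?_, ?_, ?_⟩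
  · intro k
    exact (step (ν k) (hr'subr (hball k).1)).1
  · rw [tendsto_iff_norm_sub_tendsto_zero]
    apply squeeze_zero (fun k => norm_nonneg _) (fun k => (hball k).2)
    have := (tendsto_pow_atTop_nhds_zero_of_lt_one (by norm_num : (0:ℝ) ≤ 1/2)
      (by norm_num : (1/2 : ℝ) < 1)).mul_const r'
    simpa using this
  · intro k
    have := (step (ν k) (hr'subr (hball k).1)).2
    rwa [← hrec k] at this
end
end
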